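/- In the proof of the implicit function theorem: let ũ ∈ M_w be embedded with ind_w(ũ) = 2, with positive punctures asymptotic to nondegenerate elliptic orbits x_j and weights δ_j, and let h be a nontrivial element of the kernel of the normal linearized operator D^N : E_w → F_w. Then the winding number of h satisfies 2·wind(h) = 2Σ_j w_j ≤ Σ_j(2α_w^N(x_j)+1) − #Γ = μ_w^N(ũ) − #Γ = ind_w(ũ) − 2 = 0; consequently h is nowhere vanishing and D^N is surjective. -/

import Mathlib

/-!
STATEMENT 17 (the key step in the proof of the implicit function theorem,
Theorem `thm:implicit-function`): for an embedded `ũ ∈ M_w` with `ind_w(ũ) = 2` with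
positive punctures asymptotic to nondegenerate elliptic orbits, every nontrivial kernel
element `h` of the normal linearized operator `D^N : E_w → F_w` satisfies
`2·wind(h) = 2∑ w_j ≤ ∑ (2α_w^N(x_j)+1) - #Γ = μ_w^N(ũ) - #Γ = ind_w(ũ) - 2 = 0`;
consequently `h` is nowhere vanishing and `D^N` is surjective.

`E_w` is a Banach space of sections of the (trivialized, rank-2) normal bundle over the
punctured sphere `Ṡ`, recorded through an injective linear realization
`coe : E → (Ṡ → ℝ²)`.  The facts from the linear theory are taken as hypotheses: each
nontrivial kernel element converges at the `j`-th puncture from the direction of an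
eigenfield of winding `w_j ≤ α_w^N(x_j)` with `wind(h) = ∑ w_j`; `wind(h)` equals the
algebraic count of the zeros of `h`, each zero counting positively; and `D^N` is
Fredholm of index `ind_w(ũ) = μ_w^N(ũ) + 2 - #Γ = 2`.
-/

set_option maxHeartbeats 1000000

theorem kernel_nonvanishing_and_surjective
    (n : ℕ)                                       -- #Γ
    (Sdot : Type*) (hS : Nonempty Sdot)           -- the punctured sphere Ṡ
    (E F : Type*) [NormedAddCommGroup E] [NormedSpace ℝ E]
    [NormedAddCommGroup F] [NormedSpace ℝ F]
    (DN : E →L[ℝ] F)                              -- the normal linearized operator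
    (coe : E →ₗ[ℝ] (Sdot → ℝ × ℝ))                -- sections of the normal bundle
    (hcoe : Function.Injective coe)
    (αwN : Fin n → ℤ)                             -- weighted windings α_w^N(x_j)
    (wind : E → ℤ)                                -- winding numbers of kernel elements
    -- each nontrivial kernel element approaches `0` at the `j`-th puncture from the
    -- direction of an eigenfield with winding `w_j ≤ α_w^N(x_j)`, and `wind h = ∑ w_j`:
    (hwind : ∀ h ∈ LinearMap.ker (DN : E →ₗ[ℝ] F), h ≠ 0 →
      ∃ w : Fin n → ℤ, (∀ j, w j ≤ αwN j) ∧ wind h = ∑ j, w j)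
    -- `wind h` is the algebraic count of the zeros of `h`, each counted positively:
    (hzero : ∀ h ∈ LinearMap.ker (DN : E →ₗ[ℝ] F), h ≠ 0 → (∃ z, coe h z = 0) → 1 ≤ wind h)
    -- the weighted index formula `ind_w = μ_w^N + 2 - #Γ` with `ind_w(ũ) = 2`:
    (μwN indw : ℤ)
    (hμ : μwN = ∑ j, (2 * αwN j + 1))
    (hindw : indw = μwN + 2 - (n : ℤ))
    (hind2 : indw = 2)
    -- `D^N` is Fredholm of index `ind_w`:
    (hker : FiniteDimensional ℝ (LinearMap.ker (DN : E →ₗ[ℝ] F)))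
    (hcoker : FiniteDimensional ℝ (F ⧸ LinearMap.range (DN : E →ₗ[ℝ] F)))
    (hrange : IsClosed (LinearMap.range (DN : E →ₗ[ℝ] F) : Set F))
    (hfred : (Module.finrank ℝ (LinearMap.ker (DN : E →ₗ[ℝ] F)) : ℤ) -
      (Module.finrank ℝ (F ⧸ LinearMap.range (DN : E →ₗ[ℝ] F)) : ℤ) = indw) :
    (∀ h ∈ LinearMap.ker (DN : E →ₗ[ℝ] F), h ≠ 0 → 2 * wind h ≤ 0) ∧
    (∀ h ∈ LinearMap.ker (DN : E →ₗ[ℝ] F), h ≠ 0 → ∀ z : Sdot, coe h z ≠ 0) ∧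
    Function.Surjective DN := by

  -- From the index formula: ∑ α = 0
  have hμn : μwN = (n : ℤ) := by omega
  have hsum : ∑ j, αwN j = 0 := by
    have : μwN = 2 * (∑ j, αwN j) + (n : ℤ) := by
      rw [hμ, Finset.sum_add_distrib, Finset.mul_sum]
      simp [mul_comm]
    omega
  have part1 : ∀ h ∈ LinearMap.ker (DN : E →ₗ[ℝ] F), h ≠ 0 → 2 * wind h ≤ 0 := by
    intro h hk hne
    obtain ⟨w, hw, hws⟩ := hwind h hk hne
    have : wind h ≤ ∑ j, αwN j := hws ▸ Finset.sum_le_sum (fun j _ => hw j)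
    omega
  have part2 : ∀ h ∈ LinearMap.ker (DN : E →ₗ[ℝ] F), h ≠ 0 → ∀ z : Sdot, coe h z ≠ 0 := by
    intro h hk hne z hz
    have h1 := hzero h hk hne ⟨z, hz⟩
    have h2 := part1 h hk hne
    omega
  refine ⟨part1, part2, ?_⟩
  obtain ⟨z₀⟩ := hS
  -- evaluation at z₀ is injective on the kernel
  let ev : LinearMap.ker (DN : E →ₗ[ℝ] F) →ₗ[ℝ] ℝ × ℝ :=
    { toFun := fun h => coe h.1 z₀
      map_add' := fun a b => by simp
      map_smul' := fun c a => by simp }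
  have hev : Function.Injective ev := by
    intro a b hab
    by_contra hne
    have hsub : a.1 - b.1 ∈ LinearMap.ker (DN : E →ₗ[ℝ] F) := sub_mem a.2 b.2
    have hne' : a.1 - b.1 ≠ 0 := by
      intro h0
      exact hne (Subtype.ext (sub_eq_zero.mp h0))
    have := part2 _ hsub hne' z₀
    apply this
    have : coe a.1 z₀ = coe b.1 z₀ := hab
    simp [map_sub, this]
  have hdim : Module.finrank ℝ (LinearMap.ker (DN : E →ₗ[ℝ] F)) ≤ 2 := by
    have := LinearMap.finrank_le_finrank_of_injective hev
    simpa using this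
  have hcok0 : Module.finrank ℝ (F ⧸ LinearMap.range (DN : E →ₗ[ℝ] F)) = 0 := by
    set a := Module.finrank ℝ (LinearMap.ker (DN : E →ₗ[ℝ] F)) with ha
    set b := Module.finrank ℝ (F ⧸ LinearMap.range (DN : E →ₗ[ℝ] F)) with hb
    clear_value a b
    omega
  have hsub : Subsingleton (F ⧸ LinearMap.range (DN : E →ₗ[ℝ] F)) :=
    (Module.finrank_zero_iff (R := ℝ)).mp hcok0
  have htop : LinearMap.range (DN : E →ₗ[ℝ] F) = ⊤ :=
    (Submodule.Quotient.subsingleton_iff).mp hsub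
  exact LinearMap.range_eq_top.mp htop
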